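/- Let U, Y be Banach spaces, G ∈ L(U,Y), and S ⊆ L(Y,U) a closed homogeneous set. If h_G(S ∩ M_G) = T ∩ M_G for some star-shaped set T ⊆ L(Y,U), then h_G(S ∩ M_G) = S ∩ M_G. -/

import Mathlib

open ContinuousLinearMap Set Filter Topology

section Aux

variable {U Y : Type*} [NormedAddCommGroup U] [NormedSpace ℝ U] [CompleteSpace U]
    [NormedAddCommGroup Y] [NormedSpace ℝ Y] [CompleteSpace Y]

lemma aux_unit_sub (G : U →L[ℝ] Y) (K : Y →L[ℝ] U) (hK : IsUnit (1 - G ∘L K)) :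
    1 - G ∘L (-(K ∘L Ring.inverse (1 - G ∘L K))) = Ring.inverse (1 - G ∘L K) := by
  set u : Y →L[ℝ] Y := 1 - G ∘L K with hu
  have hGK : G ∘L K = 1 - u := by rw [hu]; abel
  have : G ∘L (-(K ∘L Ring.inverse u)) = -((1 - u) * Ring.inverse u) := by
    rw [ContinuousLinearMap.comp_neg, ← ContinuousLinearMap.comp_assoc,
      ← hGK, ContinuousLinearMap.mul_def]
  rw [this, sub_neg_eq_add, sub_mul, one_mul, Ring.mul_inverse_cancel u hK]
  abel

lemma aux_isUnit (G : U →L[ℝ] Y) (K : Y →L[ℝ] U) (hK : IsUnit (1 - G ∘L K)) :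
    IsUnit (1 - G ∘L (-(K ∘L Ring.inverse (1 - G ∘L K)))) := by
  rw [aux_unit_sub G K hK]
  exact isUnit_ringInverse.2 hK

lemma aux_invol (G : U →L[ℝ] Y) (K : Y →L[ℝ] U) (hK : IsUnit (1 - G ∘L K)) :
    -((-(K ∘L Ring.inverse (1 - G ∘L K))) ∘L
      Ring.inverse (1 - G ∘L (-(K ∘L Ring.inverse (1 - G ∘L K))))) = K := by
  set u : Y →L[ℝ] Y := 1 - G ∘L K with hu
  rw [aux_unit_sub G K hK]
  have h2 : Ring.inverse (Ring.inverse u) = u := by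
    lift u to (Y →L[ℝ] Y)ˣ using hK with v
    rw [Ring.inverse_unit, Ring.inverse_unit, inv_inv]
  rw [h2, ContinuousLinearMap.neg_comp, neg_neg, ContinuousLinearMap.comp_assoc]
  have h3 : (Ring.inverse u : Y →L[ℝ] Y) ∘L u = 1 := by
    rw [← ContinuousLinearMap.mul_def, Ring.inverse_mul_cancel u hK]
  rw [h3, ContinuousLinearMap.one_def, ContinuousLinearMap.comp_id]

end Aux

/-- Theorem 3: if `S` is closed and homogeneous and `h_G(S ∩ M_G) = T ∩ M_G`
for some star-shaped set `T`, then `h_G(S ∩ M_G) = S ∩ M_G`. -/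
theorem stmt_10 {U Y : Type*} [NormedAddCommGroup U] [NormedSpace ℝ U] [CompleteSpace U]
    [NormedAddCommGroup Y] [NormedSpace ℝ Y] [CompleteSpace Y]
    (G : U →L[ℝ] Y) (S : Set (Y →L[ℝ] U))
    (hSclosed : IsClosed S)
    (hShom : ∀ K ∈ S, ∀ α : ℝ, α • K ∈ S)
    (MG : Set (Y →L[ℝ] U)) (hMG : MG = {K | IsUnit (1 - G ∘L K)})
    (hG : (Y →L[ℝ] U) → (Y →L[ℝ] U))
    (hhG : hG = fun K => -(K ∘L Ring.inverse (1 - G ∘L K)))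
    (T : Set (Y →L[ℝ] U))
    (hTstar : ∀ v ∈ T, ∀ α ∈ Set.Icc (0 : ℝ) 1, α • v ∈ T)
    (him : hG '' (S ∩ MG) = T ∩ MG) :
    hG '' (S ∩ MG) = S ∩ MG := by
  subst hMG hhG
  -- key lemma: every element of T lies in S
  have key : ∀ J : Y →L[ℝ] U, J ∈ T → J ∈ S := by
    intro J hJ
    set A : Y →L[ℝ] Y := G ∘L J with hA
    set ε : ℝ := min 1 (‖A‖ + 1)⁻¹ with hε
    have hε0 : 0 < ε := by
      apply lt_min one_pos
      positivity
    have hεnorm : ∀ α ∈ Ioc (0:ℝ) ε, ‖α • A‖ < 1 := by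
      intro α hα
      rw [norm_smul α A, Real.norm_eq_abs, abs_of_pos hα.1]
      have h1 : α ≤ (‖A‖ + 1)⁻¹ := hα.2.trans (min_le_right _ _)
      have h2 : (0:ℝ) < ‖A‖ + 1 := by positivity
      have h3 : (0:ℝ) ≤ ‖A‖ := norm_nonneg _
      nlinarith [mul_le_mul_of_nonneg_right h1 h3, inv_mul_cancel₀ (ne_of_gt h2)]
    -- the family of scaled operators lies in S
    have hmem : ∀ α ∈ Ioc (0:ℝ) ε, -(J ∘L Ring.inverse (1 - α • A)) ∈ S := by
      intro α hα
      have hαT : α • J ∈ T := hTstar J hJ α ⟨hα.1.le, hα.2.trans (min_le_left _ _)⟩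
      have hcomp : G ∘L (α • J) = α • A := by
        rw [hA, ContinuousLinearMap.comp_smul]
      have hunit : IsUnit (1 - G ∘L (α • J)) := by
        rw [hcomp]
        exact (Units.oneSub (α • A) (hεnorm α hα)).isUnit
      have hαmem : α • J ∈ T ∩ {K | IsUnit (1 - G ∘L K)} := ⟨hαT, hunit⟩
      rw [← him] at hαmem
      obtain ⟨K, ⟨hKS, hKM⟩, hK⟩ := hαmem
      have hKM' : IsUnit (1 - G ∘L K) := hKM
      -- K = h_G (α • J) by the involution property
      have hKeq : K = -((α • J) ∘L Ring.inverse (1 - G ∘L (α • J))) := by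
        have := aux_invol G K hKM'
        simp only at hK
        rw [hK] at this
        exact this.symm
      have : α⁻¹ • K ∈ S := hShom K hKS α⁻¹
      have heq : α⁻¹ • K = -(J ∘L Ring.inverse (1 - α • A)) := by
        rw [hKeq, hcomp, ContinuousLinearMap.smul_comp, smul_neg, smul_smul,
          inv_mul_cancel₀ (ne_of_gt hα.1), one_smul]
      rwa [heq] at this
    -- limit as α → 0⁺
    have htend : Tendsto (fun α : ℝ => -(J ∘L Ring.inverse (1 - α • A))) (𝓝[>] 0)
        (𝓝 (-J)) := by
      have h1 : ContinuousAt (fun α : ℝ => (1 : Y →L[ℝ] Y) - α • A) 0 := by fun_prop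
      have h2 : ContinuousAt Ring.inverse ((1 : Y →L[ℝ] Y) - (0:ℝ) • A) := by
        have : (1 : Y →L[ℝ] Y) - (0:ℝ) • A = ((1 : (Y →L[ℝ] Y)ˣ) : Y →L[ℝ] Y) := by simp
        rw [this]
        exact NormedRing.inverse_continuousAt 1
      have h3 : ContinuousAt (fun α : ℝ => Ring.inverse ((1 : Y →L[ℝ] Y) - α • A)) 0 :=
        h2.tendsto.comp h1
      have h4 : ContinuousAt (fun α : ℝ =>
          -(J ∘L Ring.inverse ((1 : Y →L[ℝ] Y) - α • A))) 0 := by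
        exact (((ContinuousLinearMap.compL ℝ Y Y U J).continuous.continuousAt).comp h3).neg
      have h5 : -(J ∘L Ring.inverse ((1 : Y →L[ℝ] Y) - (0:ℝ) • A)) = -J := by
        rw [zero_smul, sub_zero, Ring.inverse_one, ContinuousLinearMap.one_def,
          ContinuousLinearMap.comp_id]
      have := h4.tendsto
      rw [h5] at this
      exact this.mono_left nhdsWithin_le_nhds
    have hev : ∀ᶠ α in 𝓝[>] (0:ℝ), -(J ∘L Ring.inverse (1 - α • A)) ∈ S :=
      eventually_of_mem (Ioc_mem_nhdsGT hε0) hmem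
    have hnegJ : -J ∈ S := hSclosed.mem_of_tendsto htend hev
    have := hShom (-J) hnegJ (-1)
    simpa using this
  apply Set.Subset.antisymm
  · intro J hJim
    rw [him] at hJim
    exact ⟨key J hJim.1, hJim.2⟩
  · rintro K ⟨hKS, hKM⟩
    have h1 : (fun K => -(K ∘L Ring.inverse (1 - G ∘L K))) K ∈
        (fun K => -(K ∘L Ring.inverse (1 - G ∘L K))) '' (S ∩ {K | IsUnit (1 - G ∘L K)}) :=
      Set.mem_image_of_mem _ ⟨hKS, hKM⟩
    rw [him] at h1
    refine ⟨-(K ∘L Ring.inverse (1 - G ∘L K)), ⟨key _ h1.1, h1.2⟩, ?_⟩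
    exact aux_invol G K hKM
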